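/- Let q be a prime power and let n, k, t, u be non-negative integers with ∑_{i=0}^{2(t+⌊u/q⌋)} C(n,i)(q-1)^i < q^{n-k+1}. Then there exists an [n,k]_q linear code with minimum distance at least 2(t+⌊u/q⌋)+1 that contains the all-one codeword. -/

import Mathlib

open Finset

section GVHelpers

variable {F : Type} [Field F] [Fintype F] [DecidableEq F]

lemma gv_card_ne_zero_sub (F : Type) [Field F] [Fintype F] [DecidableEq F] :
    Fintype.card {x : F // x ≠ 0} = Fintype.card F - 1 := by
  have := Fintype.card_subtype_compl (fun x : F => x = 0)
  simp only [Fintype.card_subtype_eq] at this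
  convert this using 2

lemma gv_fiber_card (n : ℕ) (s : Finset (Fin n)) :
    (Finset.univ.filter (fun w : Fin n → F => Finset.univ.filter (fun i => w i ≠ 0) = s)).card
      ≤ (Fintype.card F - 1) ^ s.card := by
  classical
  have hT : (Fintype.card F - 1) ^ s.card
      = (Finset.univ : Finset (↥s → {x : F // x ≠ 0})).card := by
    rw [Finset.card_univ, Fintype.card_fun, gv_card_ne_zero_sub, Fintype.card_coe]
  rw [hT]
  apply Finset.card_le_card_of_injOn
    (fun w j => if h : w j.1 ≠ 0 then (⟨w j.1, h⟩ : {x : F // x ≠ 0}) else ⟨1, one_ne_zero⟩)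
  · intro w _; exact Finset.mem_univ _
  · intro w1 h1 w2 h2 heq
    simp only [Finset.mem_coe, Finset.mem_filter, Finset.mem_univ, true_and] at h1 h2
    funext i
    by_cases hi : i ∈ s
    · have hw1 : w1 i ≠ 0 := by
        have : i ∈ Finset.univ.filter (fun j => w1 j ≠ 0) := h1 ▸ hi
        simpa using this
      have hw2 : w2 i ≠ 0 := by
        have : i ∈ Finset.univ.filter (fun j => w2 j ≠ 0) := h2 ▸ hi
        simpa using this
      have := congrFun heq ⟨i, hi⟩
      simp only [dif_pos hw1, dif_pos hw2] at this
      exact congrArg Subtype.val this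
    · have hi1 : w1 i = 0 := by
        by_contra h; exact hi (h1 ▸ (by simp [h] : i ∈ Finset.univ.filter (fun j => w1 j ≠ 0)))
      have hi2 : w2 i = 0 := by
        by_contra h; exact hi (h2 ▸ (by simp [h] : i ∈ Finset.univ.filter (fun j => w2 j ≠ 0)))
      rw [hi1, hi2]

lemma gv_hamming_ball_card (n d : ℕ) :
    (Finset.univ.filter (fun w : Fin n → F => hammingNorm w < d)).card
      ≤ ∑ i ∈ Finset.range d, n.choose i * (Fintype.card F - 1) ^ i := by
  classical
  set S : Finset (Finset (Fin n)) := Finset.univ.powerset.filter (fun s => s.card < d) with hS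
  have hsub : Finset.univ.filter (fun w : Fin n → F => hammingNorm w < d)
      ⊆ S.biUnion (fun s => Finset.univ.filter
        (fun w : Fin n → F => Finset.univ.filter (fun i => w i ≠ 0) = s)) := by
    intro w hw
    simp only [Finset.mem_filter, Finset.mem_univ, true_and] at hw
    rw [Finset.mem_biUnion]
    refine ⟨Finset.univ.filter (fun i => w i ≠ 0), ?_, by simp⟩
    simp only [hS, Finset.mem_filter, Finset.mem_powerset, Finset.subset_univ, true_and]
    exact hw
  calc (Finset.univ.filter (fun w : Fin n → F => hammingNorm w < d)).card
      ≤ _ := Finset.card_le_card hsub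
    _ ≤ ∑ s ∈ S, (Finset.univ.filter
        (fun w : Fin n → F => Finset.univ.filter (fun i => w i ≠ 0) = s)).card :=
        Finset.card_biUnion_le
    _ ≤ ∑ s ∈ S, (Fintype.card F - 1) ^ s.card := Finset.sum_le_sum (fun s _ => gv_fiber_card n s)
    _ ≤ ∑ i ∈ Finset.range d, n.choose i * (Fintype.card F - 1) ^ i := by
        rw [← Finset.sum_fiberwise_of_maps_to (g := Finset.card) (t := Finset.range d)
          (fun s hs => by
            simp only [hS, Finset.mem_filter] at hs
            exact Finset.mem_range.mpr hs.2)]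
        apply Finset.sum_le_sum
        intro i _
        have hss : S.filter (fun s => s.card = i) ⊆ Finset.univ.powersetCard i := by
          intro s hs
          simp only [hS, Finset.mem_filter] at hs
          rw [Finset.mem_powersetCard]
          exact ⟨Finset.subset_univ _, hs.2⟩
        calc ∑ s ∈ S.filter (fun s => s.card = i), (Fintype.card F - 1) ^ s.card
            = ∑ s ∈ S.filter (fun s => s.card = i), (Fintype.card F - 1) ^ i := by
              apply Finset.sum_congr rfl
              intro s hs
              rw [(Finset.mem_filter.mp hs).2]
          _ = (S.filter (fun s => s.card = i)).card * (Fintype.card F - 1) ^ i := by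
              rw [Finset.sum_const, smul_eq_mul]
          _ ≤ n.choose i * (Fintype.card F - 1) ^ i := by
              apply Nat.mul_le_mul_right
              calc (S.filter (fun s => s.card = i)).card
                  ≤ (Finset.univ.powersetCard i (α := Fin n)).card := Finset.card_le_card hss
                _ = n.choose i := by
                    rw [Finset.card_powersetCard, Finset.card_univ, Fintype.card_fin]

/-- The core GV extension argument. -/
lemma gv_extension (n k d : ℕ) (hd : 1 ≤ d) (hk : 1 ≤ k) (hkn : k ≤ n)
    (hGV : ∑ i ∈ Finset.range d, n.choose i * (Fintype.card F - 1) ^ i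
      < Fintype.card F ^ (n - k + 1)) :
    ∃ C : Submodule F (Fin n → F), Module.finrank F C = k ∧
      (fun _ : Fin n => (1 : F)) ∈ C ∧
      (∀ c ∈ C, c ≠ 0 → d ≤ hammingNorm c) := by
  classical
  set q := Fintype.card F with hq
  have hq2 : 2 ≤ q := Fintype.one_lt_card
  have hq1 : 1 ≤ q := le_trans one_le_two hq2
  have hn1 : 1 ≤ n := le_trans hk hkn
  -- the GV bound forces d ≤ n
  have hdn : d ≤ n := by
    by_contra hlt
    push_neg at hlt
    have hsub : Finset.range (n + 1) ⊆ Finset.range d := Finset.range_subset_range.mpr hlt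
    have h2 : ∑ i ∈ Finset.range (n + 1), n.choose i * (q - 1) ^ i = q ^ n := by
      have hbin := add_pow (R := ℕ) (q - 1) 1 n
      rw [Nat.sub_add_cancel hq1] at hbin
      rw [hbin]
      apply Finset.sum_congr rfl
      intro i _
      simp [mul_comm]
    have h1 : q ^ n ≤ ∑ i ∈ Finset.range d, n.choose i * (q - 1) ^ i := by
      rw [← h2]
      exact Finset.sum_le_sum_of_subset hsub
    have h3 : q ^ (n - k + 1) ≤ q ^ n :=
      Nat.pow_le_pow_right hq1 (by omega)
    omega
  -- inductive construction
  have key : ∀ m, 1 ≤ m → m ≤ k → ∃ C : Submodule F (Fin n → F),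
      Module.finrank F C = m ∧ (fun _ : Fin n => (1 : F)) ∈ C ∧
      (∀ c ∈ C, c ≠ 0 → d ≤ hammingNorm c) := by
    intro m hm
    induction m, hm using Nat.le_induction with
    | base =>
      intro _
      have hone : (fun _ : Fin n => (1 : F)) ≠ 0 := by
        intro h
        have := congrFun h ⟨0, hn1⟩
        exact one_ne_zero this
      refine ⟨Submodule.span F {fun _ : Fin n => (1 : F)}, finrank_span_singleton hone,
        Submodule.mem_span_singleton_self _, ?_⟩
      intro c hc hc0
      obtain ⟨a, rfl⟩ := Submodule.mem_span_singleton.mp hc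
      have ha : a ≠ 0 := by
        intro h; exact hc0 (by rw [h, zero_smul])
      have hnorm : hammingNorm (a • fun _ : Fin n => (1 : F)) = n := by
        simp only [hammingNorm, Pi.smul_apply, smul_eq_mul, mul_one]
        rw [Finset.filter_true_of_mem (fun i _ => ha), Finset.card_univ, Fintype.card_fin]
      rw [hnorm]; exact hdn
    | succ m hm ih =>
      intro hmk
      obtain ⟨C, hC1, hC2, hC3⟩ := ih (le_trans (Nat.le_succ m) hmk)
      have : Fintype C := Fintype.ofFinite C
      -- the bad set
      set B : Finset (Fin n → F) :=
        Finset.univ.filter (fun v => ∃ c ∈ C, hammingNorm (v - c) < d) with hB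
      have hBcard : B.card < Fintype.card (Fin n → F) := by
        have hsub : B ⊆ Finset.image (fun p : (Fin n → F) × (Fin n → F) => p.1 + p.2)
            ((Finset.univ.filter (fun x => x ∈ C)) ×ˢ
              (Finset.univ.filter (fun w : Fin n → F => hammingNorm w < d))) := by
          intro v hv
          simp only [hB, Finset.mem_filter, Finset.mem_univ, true_and] at hv
          obtain ⟨c, hc, hcd⟩ := hv
          rw [Finset.mem_image]
          refine ⟨(c, v - c), ?_, by simp⟩
          rw [Finset.mem_product]
          constructor
          · simp only [Finset.mem_filter, Finset.mem_univ, true_and]; exact hc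
          · simp only [Finset.mem_filter, Finset.mem_univ, true_and]; exact hcd
        have h1 : B.card ≤ Fintype.card C *
            (Finset.univ.filter (fun w : Fin n → F => hammingNorm w < d)).card := by
          calc B.card ≤ _ := Finset.card_le_card hsub
            _ ≤ _ := Finset.card_image_le
            _ = _ := by
                rw [Finset.card_product]
                congr 1
                rw [← Fintype.card_coe]
                exact Fintype.card_congr
                  ((Equiv.refl _).subtypeEquiv (fun x => by simp))
        have h2 : Fintype.card C = q ^ m := by
          rw [Module.card_eq_pow_finrank (K := F) (V := C), hC1]
        have h3 : (Finset.univ.filter (fun w : Fin n → F => hammingNorm w < d)).card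
            ≤ ∑ i ∈ Finset.range d, n.choose i * (q - 1) ^ i := gv_hamming_ball_card n d
        have h4 : Fintype.card (Fin n → F) = q ^ n := by
          rw [Fintype.card_fun, Fintype.card_fin]
        rw [h4]
        calc B.card ≤ q ^ m * ∑ i ∈ Finset.range d, n.choose i * (q - 1) ^ i :=
              le_trans h1 (by rw [h2]; exact Nat.mul_le_mul_left _ h3)
          _ ≤ q ^ (k - 1) * ∑ i ∈ Finset.range d, n.choose i * (q - 1) ^ i :=
              Nat.mul_le_mul_right _ (Nat.pow_le_pow_right hq1 (by omega))
          _ < q ^ (k - 1) * q ^ (n - k + 1) :=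
              mul_lt_mul_of_pos_left hGV (Nat.pow_pos (by omega))
          _ = q ^ n := by rw [← pow_add]; congr 1; omega
      -- pick a good vector
      obtain ⟨v, hv⟩ : ∃ v : Fin n → F, v ∉ B := by
        by_contra h
        push_neg at h
        have : (Finset.univ : Finset (Fin n → F)) ⊆ B := fun v _ => h v
        have := Finset.card_le_card this
        rw [Finset.card_univ] at this
        omega
      simp only [hB, Finset.mem_filter, Finset.mem_univ, true_and, not_exists, not_and] at hv
      push_neg at hv
      have hgood : ∀ c ∈ C, d ≤ hammingNorm (v - c) := fun c hc => hv c hc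
      have hvC : v ∉ C := by
        intro h
        have := hgood v h
        simp only [sub_self, hammingNorm_zero] at this
        omega
      refine ⟨C ⊔ Submodule.span F {v}, ?_, Submodule.mem_sup_left hC2, ?_⟩
      · -- dimension
        have hdisj : C ⊓ Submodule.span F {v} = ⊥ := by
          rw [← disjoint_iff]
          exact (Submodule.disjoint_span_singleton'
            (fun h => hvC (by rw [h]; exact C.zero_mem))).mpr hvC
        have := Submodule.finrank_sup_add_finrank_inf_eq C (Submodule.span F {v})
        rw [hdisj, finrank_bot, hC1] at this
        have hv0 : v ≠ 0 := fun h => hvC (h ▸ C.zero_mem)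
        rw [finrank_span_singleton hv0] at this
        omega
      · -- minimum distance
        intro c hc hc0
        rw [Submodule.mem_sup] at hc
        obtain ⟨y, hy, z, hz, rfl⟩ := hc
        obtain ⟨a, rfl⟩ := Submodule.mem_span_singleton.mp hz
        by_cases ha : a = 0
        · subst ha
          rw [zero_smul, add_zero] at hc0 ⊢
          exact hC3 y hy hc0
        · have hmem : -(a⁻¹ • y) ∈ C := C.neg_mem (C.smul_mem _ hy)
          have hnorm : hammingNorm (y + a • v) = hammingNorm (v - -(a⁻¹ • y)) := by
            have heq : y + a • v = a • (v - -(a⁻¹ • y)) := by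
              rw [sub_neg_eq_add, smul_add, smul_smul, mul_inv_cancel₀ ha, one_smul, add_comm]
            rw [heq]
            exact hammingNorm_smul (fun _ => smul_right_injective F ha) _
          rw [hnorm]
          exact hgood _ hmem
  exact key k hk le_rfl

end GVHelpers

/-- GV-type existence of an `[n,k]_q` code of minimum distance at least
`2(t + ⌊u/q⌋) + 1` containing the all-one word. -/
theorem gv_code_with_allone (F : Type) [Field F] [Fintype F] [DecidableEq F]
    (q n k t u : ℕ) (hq : Fintype.card F = q) (hk : 1 ≤ k) (hkn : k ≤ n)
    (hGV : ∑ i ∈ Finset.range (2 * (t + u / q) + 1), n.choose i * (q - 1) ^ i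
      < q ^ (n - k + 1)) :
    ∃ C : Submodule F (Fin n → F), Module.finrank F C = k ∧
      (fun _ : Fin n => (1 : F)) ∈ C ∧
      (∀ c ∈ C, c ≠ 0 → 2 * (t + u / q) + 1 ≤ hammingNorm c) := by
  subst hq
  exact gv_extension n k _ (by omega) hk hkn hGV
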